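/- (Theorem 6) Let 3 ≤ k ≤ n, let S be a k-element subset of Fin n, and let y be an unordered pair of distinct vertices not contained in S. The restriction of the k-clique function f_{n,k} to the variable set X = {edges within S} ∪ {y} (all other edge variables set to false) is not invariant under all permutations of X: for any edge e within S, the transposition exchanging the variables e and y is not an automorphism of the restricted function; hence the automorphism group of the restricted function is not the full symmetric group on its C(k,2)+1 variables. -/

import Mathlib

/-- An edge on the vertex set `Fin n`: an unordered pair of distinct vertices. -/
abbrev Edge (n : ℕ) := {e : Sym2 (Fin n) // ¬ e.IsDiag}

/-- The `k`-clique Boolean function on edge assignments: `true` iff there is a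
`k`-element vertex set all of whose internal edges are present. -/
def cliqueFun (n k : ℕ) (x : Edge n → Bool) : Bool :=
  decide (∃ S : Finset (Fin n), S.card = k ∧
    ∀ e : Edge n, (e : Sym2 (Fin n)) ∈ S.sym2 → x e = true)

/-- The set of edges with both endpoints in `S`. -/
def edgesIn (n : ℕ) (S : Finset (Fin n)) : Finset (Edge n) :=
  Finset.univ.filter (fun e => (e : Sym2 (Fin n)) ∈ S.sym2)

/-- Restriction of `cliqueFun` to the edge variables in `X`, obtained by setting
all edge variables outside `X` to `false`. -/
def cliqueRestrict (n k : ℕ) (X : Finset (Edge n)) (x : {e : Edge n // e ∈ X} → Bool) : Bool :=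
  cliqueFun n k (fun e => if h : e ∈ X then x ⟨e, h⟩ else false)

/-- The permutation of edges induced by a relabeling of the vertices,
sending the edge `{i, j}` to `{σ i, σ j}`. -/
def edgePerm {n : ℕ} (σ : Equiv.Perm (Fin n)) : Equiv.Perm (Edge n) where
  toFun e := ⟨Sym2.map σ e.1, fun h => e.2 ((Sym2.isDiag_map σ.injective).mp h)⟩
  invFun e := ⟨Sym2.map σ.symm e.1, fun h => e.2 ((Sym2.isDiag_map σ.symm.injective).mp h)⟩
  left_inv e := Subtype.ext (by simp [Sym2.map_map])
  right_inv e := Subtype.ext (by simp [Sym2.map_map])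

/-- Theorem 6: for `3 ≤ k ≤ n`, a `k`-element vertex set `S` and an
edge `y` not contained in `S`, the restriction of the `k`-clique function to
`X = {edges within S} ∪ {y}` is not invariant under all permutations of `X`:
for any edge `e` within `S` the transposition exchanging `e` and `y` is not an
automorphism, hence the automorphism group of the restricted function is not
the full symmetric group on its `C(k,2) + 1` variables. -/
theorem cliqueRestrict_with_extra_edge_not_fully_symmetric (n k : ℕ)
    (hk : 3 ≤ k) (hkn : k ≤ n) (S : Finset (Fin n)) (hS : S.card = k)
    (y : Edge n) (hy : y ∉ edgesIn n S) :
    (∀ e : Edge n, (he : e ∈ edgesIn n S) →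
      ¬ (∀ x : {a : Edge n // a ∈ insert y (edgesIn n S)} → Bool,
          cliqueRestrict n k (insert y (edgesIn n S))
            (x ∘ Equiv.swap ⟨e, Finset.mem_insert_of_mem he⟩
                            ⟨y, Finset.mem_insert_self y (edgesIn n S)⟩) =
          cliqueRestrict n k (insert y (edgesIn n S)) x)) ∧
    ¬ (∀ π : Equiv.Perm {a : Edge n // a ∈ insert y (edgesIn n S)},
        ∀ x : {a : Edge n // a ∈ insert y (edgesIn n S)} → Bool,
          cliqueRestrict n k (insert y (edgesIn n S)) (x ∘ π) =
          cliqueRestrict n k (insert y (edgesIn n S)) x) := by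

  have key : ∀ e : Edge n, (he : e ∈ edgesIn n S) →
      ¬ (∀ x : {a : Edge n // a ∈ insert y (edgesIn n S)} → Bool,
          cliqueRestrict n k (insert y (edgesIn n S))
            (x ∘ Equiv.swap ⟨e, Finset.mem_insert_of_mem he⟩
                            ⟨y, Finset.mem_insert_self y (edgesIn n S)⟩) =
          cliqueRestrict n k (insert y (edgesIn n S)) x) := by
    intro e he hall
    set X := insert y (edgesIn n S) with hX
    set x : {a : Edge n // a ∈ X} → Bool :=
      fun a => decide ((a : Edge n) ∈ edgesIn n S) with hxdef
    have hey : e ≠ y := fun h => hy (h ▸ he)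
    have hR : cliqueRestrict n k X x = true := by
      unfold cliqueRestrict cliqueFun
      rw [decide_eq_true_iff]
      refine ⟨S, hS, ?_⟩
      intro a ha
      have haX : a ∈ edgesIn n S := by
        simp only [edgesIn, Finset.mem_filter, Finset.mem_univ, true_and]; exact ha
      simp only [dif_pos (Finset.mem_insert_of_mem haX)]
      simp [hxdef, haX]
      exact Finset.mem_insert_of_mem haX
    set p : {a : Edge n // a ∈ X} := ⟨e, Finset.mem_insert_of_mem he⟩ with hp
    set q : {a : Edge n // a ∈ X} := ⟨y, Finset.mem_insert_self y (edgesIn n S)⟩ with hq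
    set g : Edge n → Bool :=
      fun a => if h : a ∈ X then (x ∘ Equiv.swap p q) ⟨a, h⟩ else false with hg
    have hge : g e = false := by
      rw [hg]
      simp only [dif_pos (Finset.mem_insert_of_mem he)]
      have : (⟨e, Finset.mem_insert_of_mem he⟩ : {a : Edge n // a ∈ X}) = p := rfl
      simp only [Function.comp_apply, this, Equiv.swap_apply_left]
      simp [hxdef, hq, hy]
    have hL : cliqueRestrict n k X (x ∘ Equiv.swap p q) = false := by
      unfold cliqueRestrict cliqueFun
      rw [decide_eq_false_iff_not]
      rintro ⟨T, hT, hall'⟩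
      by_cases hTS : T ⊆ S
      · have hTeq : T = S := Finset.eq_of_subset_of_card_le hTS (by rw [hS, hT])
        have heT : (e : Sym2 (Fin n)) ∈ T.sym2 := by
          rw [hTeq]
          have := he
          simpa only [edgesIn, Finset.mem_filter, Finset.mem_univ, true_and] using this
        have := hall' e heT
        rw [← hg] at this
        rw [hge] at this
        exact Bool.false_ne_true this
      · obtain ⟨v, hvT, hvS⟩ := Finset.not_subset.mp hTS
        have h2 : 1 < (T.erase v).card := by
          rw [Finset.card_erase_of_mem hvT, hT]; omega
        obtain ⟨u, hu, w, hw, huw⟩ := Finset.one_lt_card.mp h2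
        obtain ⟨huv, huT⟩ := Finset.mem_erase.mp hu
        obtain ⟨hwv, hwT⟩ := Finset.mem_erase.mp hw
        have aux : ∀ z : Fin n, z ≠ v → z ∈ T → ∀ hd : ¬ (s(v, z) : Sym2 (Fin n)).IsDiag,
            (⟨s(v, z), hd⟩ : Edge n) = y := by
          intro z hzv hzT hd
          set a : Edge n := ⟨s(v, z), hd⟩ with ha
          have haT : (a : Sym2 (Fin n)) ∈ T.sym2 :=
            Finset.mk_mem_sym2_iff.mpr ⟨hvT, hzT⟩
          have htrue := hall' a haT
          have haS : a ∉ edgesIn n S := by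
            simp only [edgesIn, Finset.mem_filter, Finset.mem_univ, true_and, ha,
              Finset.mk_mem_sym2_iff]
            exact fun h => hvS h.1
          have haX : a ∈ X := by
            by_contra hcon
            simp only [dif_neg hcon] at htrue
            exact Bool.noConfusion htrue
          rcases Finset.mem_insert.mp haX with h | h
          · exact h
          · exact absurd h haS
        have h1 := aux u huv huT (by simp only [Sym2.mk_isDiag_iff]; exact fun h => huv h.symm)
        have h2' := aux w hwv hwT (by simp only [Sym2.mk_isDiag_iff]; exact fun h => hwv h.symm)
        have : s(v, u) = s(v, w) := by
          have := h1.trans h2'.symm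
          exact congrArg Subtype.val this
        exact huw (Sym2.congr_right.mp this)
    have := hall x
    rw [hR] at this
    rw [this] at hL
    exact Bool.noConfusion hL
  refine ⟨key, ?_⟩
  intro hall
  have h2 : 1 < S.card := by omega
  obtain ⟨i, hi, j, hj, hij⟩ := Finset.one_lt_card.mp h2
  have he : (⟨s(i, j), by simp [Sym2.mk_isDiag_iff, hij]⟩ : Edge n) ∈ edgesIn n S := by
    simp only [edgesIn, Finset.mem_filter, Finset.mem_univ, true_and]
    exact Finset.mk_mem_sym2_iff.mpr ⟨hi, hj⟩
  exact key _ he (fun x => hall _ x)
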